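/- arXiv:1910.00536 — 2 statements merged into one kernel-verified Lean document; each statement's English description precedes it below -/
import Mathlib

section
/- Let A[0..2h] be 2h+1 i.i.d. uniform random variables on {0,1,...,s-1}. For any fixed index k, the probability that A[k] ≤ A[j] for all j ≠ k equals (1/s) · Σ_{j=1}^{s} (j/s)^{2h}. -/
open Finset

lemma nonstrict_min_count (s h : ℕ) (k : Fin (2 * h + 1)) :
    (Finset.univ.filter
        (fun A : Fin (2 * h + 1) → Fin s => ∀ j, j ≠ k → A k ≤ A j)).card
      = ∑ j ∈ Finset.Icc 1 s, j ^ (2 * h) := by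
  rw [Finset.card_eq_sum_card_fiberwise
    (f := fun A : Fin (2 * h + 1) → Fin s => A k) (t := Finset.univ)
    (fun _ _ => Finset.mem_univ _)]
  have hfib : ∀ v : Fin s,
      ((Finset.univ.filter
        (fun A : Fin (2 * h + 1) → Fin s => ∀ j, j ≠ k → A k ≤ A j)).filter
          (fun A => A k = v)).card = (s - (v : ℕ)) ^ (2 * h) := by
    intro v
    have hset : (Finset.univ.filter
        (fun A : Fin (2 * h + 1) → Fin s => ∀ j, j ≠ k → A k ≤ A j)).filter
          (fun A => A k = v)
        = Fintype.piFinset (fun j => if j = k then {v} else Finset.Ici v) := by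
      ext A
      simp only [Finset.mem_filter, Finset.mem_univ, true_and,
        Fintype.mem_piFinset]
      constructor
      · rintro ⟨hle, hk⟩ j
        by_cases hj : j = k
        · simp [hj, hk]
        · simpa [hj, hk] using hle j hj
      · intro hA
        have hk : A k = v := by simpa using hA k
        refine ⟨fun j hj => ?_, hk⟩
        have := hA j
        rw [if_neg hj, Finset.mem_Ici] at this
        rw [hk]; exact this
    rw [hset, Fintype.card_piFinset]
    have : ∀ j : Fin (2 * h + 1),
        ((if j = k then ({v} : Finset (Fin s)) else Finset.Ici v)).card
          = if j = k then 1 else s - (v : ℕ) := by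
      intro j
      by_cases hj : j = k <;> simp [hj, Fin.card_Ici]
    simp_rw [this]
    rw [← Finset.prod_erase_mul Finset.univ _ (Finset.mem_univ k), if_pos rfl, mul_one]
    rw [Finset.prod_congr rfl (fun x hx => if_neg (Finset.ne_of_mem_erase hx))]
    rw [Finset.prod_const, Finset.card_erase_of_mem (Finset.mem_univ k)]
    congr 1
    simp
  simp_rw [hfib]
  rw [Fin.sum_univ_eq_sum_range (fun i => (s - i) ^ (2 * h)) s]
  refine Finset.sum_nbij' (fun a => s - a) (fun b => s - b) ?_ ?_ ?_ ?_ ?_ <;>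
    intro a ha <;>
    simp only [Finset.mem_range, Finset.mem_Icc] at ha ⊢ <;>
    omega

/-- For `2h+1` i.i.d. uniform values on `{0,...,s-1}` (modeled by the uniform
counting probability on functions `Fin (2h+1) → Fin s`), the probability that a
fixed index `k` is a non-strict minimum equals `(1/s) · Σ_{j=1}^{s} (j/s)^{2h}`. -/
theorem nonstrict_min_prob (s h : ℕ) (hs : 0 < s) (hh : 0 < h) (k : Fin (2 * h + 1)) :
    ((Finset.univ.filter
        (fun A : Fin (2 * h + 1) → Fin s => ∀ j, j ≠ k → A k ≤ A j)).card : ℝ)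
      / ((s : ℝ) ^ (2 * h + 1))
    = (1 / (s : ℝ)) * ∑ j ∈ Finset.Icc 1 s, ((j : ℝ) / s) ^ (2 * h) := by
  rw [nonstrict_min_count s h k]
  have hs' : (s : ℝ) ≠ 0 := Nat.cast_ne_zero.mpr hs.ne'
  push_cast
  simp_rw [div_pow]
  rw [← Finset.sum_div, pow_succ', mul_comm (s:ℝ), ← div_div, div_eq_mul_inv (_ / _),
    mul_comm, inv_eq_one_div]
end

section
/- If a string σ of length N is partitioned into consecutive substrings σ_1,...,σ_m and each σ_i is represented by a node, then the multiset of 2-shingles (pairs of adjacent partition hashes, with a sentinel 0 before σ_1) together with the starting hash determines the sequence (H(σ_1),...,H(σ_m)) uniquely whenever all hash values H(σ_i) are pairwise distinct. -/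
/-- The multiset of 2-shingles of a hash sequence `a : Fin m → ℕ`, where a
sentinel `0` precedes the first value: the shingle at index `i` is
`(a (i-1), a i)`, with first component `0` at `i = 0`. -/
def shingles {m : ℕ} (a : Fin m → ℕ) : Multiset (ℕ × ℕ) :=
  (Finset.univ : Finset (Fin m)).val.map
    (fun i =>
      ((if i.val = 0 then 0
        else a ⟨i.val - 1, Nat.lt_of_le_of_lt (Nat.sub_le _ _) i.isLt⟩), a i))

/-- If all hash values in each sequence are pairwise distinct, the multiset of
2-shingles together with the starting hash determines the hash sequence
uniquely. -/
theorem shingles_determine_sequence {m : ℕ} (hm : 0 < m) (a b : Fin m → ℕ)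
    (ha : Function.Injective a) (hb : Function.Injective b)
    (hsh : shingles a = shingles b)
    (h0 : a ⟨0, hm⟩ = b ⟨0, hm⟩) :
    a = b := by
  have key : ∀ n : ℕ, ∀ h : n < m, a ⟨n, h⟩ = b ⟨n, h⟩ := by
    intro n
    induction n using Nat.strong_induction_on with
    | _ n ih =>
      intro h
      match n, h with
      | 0, h => exact h0
      | (k+1), h =>
        have hk : k < m := Nat.lt_of_succ_lt h
        have hmem : ((b ⟨k, hk⟩, b ⟨k+1, h⟩) : ℕ × ℕ) ∈ shingles b := by
          unfold shingles
          rw [Multiset.mem_map]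
          refine ⟨⟨k+1, h⟩, Finset.mem_val.mpr (Finset.mem_univ _), ?_⟩
          simp
        rw [← hsh] at hmem
        unfold shingles at hmem
        rw [Multiset.mem_map] at hmem
        obtain ⟨j, -, hj⟩ := hmem
        by_cases hj0 : j.val = 0
        · simp only [hj0, if_pos] at hj
          have hja : a j = b ⟨k+1, h⟩ := congrArg Prod.snd hj
          have : j = ⟨0, hm⟩ := Fin.ext hj0
          rw [this, h0] at hja
          exact absurd (hb hja) (by simp [Fin.ext_iff])
        · simp only [hj0, if_neg, if_false] at hj
          have h1 : a ⟨j.val - 1, _⟩ = b ⟨k, hk⟩ := congrArg Prod.fst hj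
          have h2 : a j = b ⟨k+1, h⟩ := congrArg Prod.snd hj
          rw [← ih k (Nat.lt_succ_self k) hk] at h1
          have := ha h1
          have hjv : j.val = k + 1 := by
            have := Fin.val_eq_val _ _ |>.mpr this
            simp at this
            omega
          have : j = ⟨k+1, h⟩ := Fin.ext hjv
          rw [this] at h2
          exact h2
  funext i
  have := key i.val i.isLt
  simpa using this
end
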